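/- arXiv:1612.02117 — 2 statements merged into one kernel-verified Lean document; each statement's English description precedes it below -/
import Mathlib

section
/- Let R be a commutative ring, n a natural number, e : {1,…,n} × {1,…,n} → R a function, and σ an involution of {1,…,n} whose moved set m(σ) has cardinality 2p with p ≥ 1. Then the (finite) sum Σ_{t ≥ 1} Σ_{(σ₁,…,σ_t)} (−1)^t · E_{σ₁}·E_{σ₂}⋯E_{σ_t} = (−1)^p · E_σ, where the inner sum is over all ordered t-tuples (σ₁,…,σ_t) of non-identity involutions of {1,…,n} whose moved sets m(σ₁),…,m(σ_t) are pairwise disjoint and whose composite σ₁∘σ₂∘⋯∘σ_t equals σ. -/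
open Finset Equiv

namespace Miyamoto

variable {n : ℕ}

def Valid (σ : Perm (Fin n)) {t : ℕ} (f : Fin t → Perm (Fin n)) : Prop :=
  (∀ i, f i * f i = 1 ∧ f i ≠ 1) ∧
    (∀ i j, i ≠ j → ∀ x, f i x ≠ x → f j x = x) ∧ (List.ofFn f).prod = σ

lemma sq_apply {σ : Perm (Fin n)} (h : σ * σ = 1) (x : Fin n) : σ (σ x) = x := by
  have := congrArg (fun ρ : Perm (Fin n) => ρ x) h
  simpa using this

lemma inv_self {σ : Perm (Fin n)} (h : σ * σ = 1) : σ⁻¹ = σ :=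
  inv_eq_of_mul_eq_one_right h

lemma listprod_fixed : ∀ {t : ℕ} (f : Fin t → Perm (Fin n)) (x : Fin n),
    (∀ i, f i x = x) → (List.ofFn f).prod x = x := by
  intro t
  induction t with
  | zero => intro f x _; simp
  | succ s IH =>
    intro f x h
    rw [List.ofFn_succ, List.prod_cons, Perm.mul_apply,
      IH (fun i => f i.succ) x (fun i => h i.succ), h 0]

lemma listprod_moved {t : ℕ} (f : Fin t → Perm (Fin n))
    (hinv : ∀ i, f i * f i = 1)
    (hdisj : ∀ i j, i ≠ j → ∀ x, f i x ≠ x → f j x = x)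
    (i : Fin t) (x : Fin n) (hx : f i x ≠ x) : (List.ofFn f).prod x = f i x := by
  induction t with
  | zero => exact absurd i.pos (by simp)
  | succ s IH =>
    rw [List.ofFn_succ, List.prod_cons, Perm.mul_apply]
    refine Fin.cases ?_ ?_ i hx
    · intro h0
      rw [listprod_fixed (fun j => f j.succ) x
        (fun j => hdisj 0 j.succ (Fin.succ_ne_zero j).symm x h0)]
    · intro j hj
      rw [IH (fun k => f k.succ) (fun k => hinv k.succ)
        (fun a b hab => hdisj a.succ b.succ (by simpa using hab)) j hj]
      have hmov : f j.succ (f j.succ x) ≠ f j.succ x := by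
        rw [sq_apply (hinv j.succ)]
        exact fun h => hj h.symm
      exact hdisj j.succ 0 (Fin.succ_ne_zero j) _ hmov

lemma valid_apply {σ : Perm (Fin n)} {t : ℕ} {f : Fin t → Perm (Fin n)}
    (hf : Valid σ f) (i : Fin t) (x : Fin n) (hx : f i x ≠ x) : σ x = f i x := by
  rw [← hf.2.2]; exact listprod_moved f (fun k => (hf.1 k).1) hf.2.1 i x hx

lemma valid_fixed {σ : Perm (Fin n)} {t : ℕ} {f : Fin t → Perm (Fin n)}
    (hf : Valid σ f) (x : Fin n) (hx : ∀ i, f i x = x) : σ x = x := by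
  rw [← hf.2.2]; exact listprod_fixed f x hx

lemma sq_apply' {σ : Perm (Fin n)} (h : σ * σ = 1) (x : Fin n) : σ (σ x) = x := by
  have := congrArg (fun ρ : Perm (Fin n) => ρ x) h
  simpa using this

/-- The sub-involution property. -/
def SubInv (σ ρ : Perm (Fin n)) : Prop :=
  ρ * ρ = 1 ∧ ∀ x, ρ x ≠ x → ρ x = σ x

open scoped Classical in
noncomputable def SubInvStar (σ : Perm (Fin n)) : Finset (Perm (Fin n)) :=
  univ.filter fun ρ => SubInv σ ρ ∧ ρ ≠ 1

lemma mem_subInvStar {σ ρ : Perm (Fin n)} :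
    ρ ∈ SubInvStar σ ↔ SubInv σ ρ ∧ ρ ≠ 1 := by
  classical
  simp [SubInvStar]

variable {σ ρ : Perm (Fin n)}

namespace SubInv

lemma fixed_apply (hσ : σ * σ = 1) (h : SubInv σ ρ) {x : Fin n} (hx : ρ x = x) :
    ρ (σ x) = σ x := by
  by_contra hne
  have h1 : ρ (σ x) = x := by rw [h.2 _ hne, sq_apply' hσ]
  have h2 : σ x = x := by
    have := congrArg ρ h1
    rwa [sq_apply' h.1, hx] at this
  exact hne (by rw [h2, hx])

lemma mul_apply_moved (h : SubInv σ ρ) {x : Fin n} (hx : ρ x ≠ x) :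
    (ρ * σ) x = x := by
  have := h.2 x hx
  rw [Perm.mul_apply, ← this, sq_apply' h.1]

lemma mul_apply_fixed (hσ : σ * σ = 1) (h : SubInv σ ρ) {x : Fin n} (hx : ρ x = x) :
    (ρ * σ) x = σ x := by
  rw [Perm.mul_apply, h.fixed_apply hσ hx]

lemma mul_moved_iff (hσ : σ * σ = 1) (h : SubInv σ ρ) {x : Fin n} :
    (ρ * σ) x ≠ x ↔ σ x ≠ x ∧ ρ x = x := by
  constructor
  · intro hm
    by_cases hx : ρ x = x
    · refine ⟨?_, hx⟩
      rw [h.mul_apply_fixed hσ hx] at hm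
      exact hm
    · exact absurd (h.mul_apply_moved hx) hm
  · rintro ⟨h1, h2⟩
    rw [h.mul_apply_fixed hσ h2]
    exact h1

lemma mul_sq (hσ : σ * σ = 1) (h : SubInv σ ρ) : (ρ * σ) * (ρ * σ) = 1 := by
  ext x
  simp only [Perm.mul_apply, Perm.one_apply]
  by_cases hx : ρ x = x
  · have h1 : ρ (σ x) = σ x := h.fixed_apply hσ hx
    rw [h1, sq_apply' hσ, hx]
  · have h1 : ρ (σ x) = x := by
      rw [← h.2 x hx, sq_apply' h.1]
    rw [h1, h1]

lemma mul_cancel (h : SubInv σ ρ) : ρ * (ρ * σ) = σ := by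
  rw [← mul_assoc, h.1, one_mul]

lemma supp_subset (h : SubInv σ ρ) {x : Fin n} (hx : ρ x ≠ x) : σ x ≠ x := by
  rw [← h.2 x hx]; exact hx

end SubInv



noncomputable def C (σ : Perm (Fin n)) (t : ℕ) : ℕ :=
  ((univ : Finset (Fin t → Perm (Fin n))).filter
    (fun f => (∀ i, f i * f i = 1 ∧ f i ≠ 1) ∧
      (∀ i j, i ≠ j → ∀ x, f i x ≠ x → f j x = x) ∧
      (List.ofFn f).prod = σ)).card

lemma mem_C_filter {σ : Perm (Fin n)} {t : ℕ} {f : Fin t → Perm (Fin n)} :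
    f ∈ ((univ : Finset (Fin t → Perm (Fin n))).filter
    (fun f => (∀ i, f i * f i = 1 ∧ f i ≠ 1) ∧
      (∀ i j, i ≠ j → ∀ x, f i x ≠ x → f j x = x) ∧
      (List.ofFn f).prod = σ)) ↔ Valid σ f := by
  simp only [mem_filter, mem_univ, true_and]; rfl

lemma C_zero (σ : Perm (Fin n)) : C σ 0 = if σ = 1 then 1 else 0 := by
  by_cases h : σ = 1
  · subst h
    rw [C, if_pos rfl]
    rw [filter_true_of_mem, card_univ]
    · simp [Fintype.card_fun]
    · intro f _
      refine ⟨fun i => i.elim0, fun i => i.elim0, by simp⟩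
  · rw [C, if_neg h, card_eq_zero, filter_eq_empty_iff]
    intro f _
    rintro ⟨-, -, hprod⟩
    exact h (by simpa using hprod.symm)


lemma valid_head_subInv {σ : Perm (Fin n)} {t : ℕ} {f : Fin t → Perm (Fin n)}
    (hf : Valid σ f) (i : Fin t) : f i ∈ SubInvStar σ :=
  mem_subInvStar.2 ⟨⟨(hf.1 i).1, fun x hx => (valid_apply hf i x hx).symm⟩, (hf.1 i).2⟩

lemma C_one_succ (s : ℕ) : C (1 : Perm (Fin n)) (s + 1) = 0 := by
  rw [C, card_eq_zero, filter_eq_empty_iff]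
  intro f _ hf
  have hf' : Valid 1 f := hf
  obtain ⟨x, hx⟩ : ∃ x, f 0 x ≠ x := by
    by_contra h
    push_neg at h
    exact (hf'.1 0).2 (Equiv.ext h)
  have := valid_apply hf' 0 x hx
  simp at this
  exact hx this.symm

lemma C_succ (σ : Perm (Fin n)) (hσ : σ * σ = 1) (s : ℕ) :
    C σ (s + 1) = ∑ ρ ∈ SubInvStar σ, C (ρ * σ) s := by
  classical
  rw [C]
  rw [card_eq_sum_card_fiberwise
    (f := fun f : Fin (s + 1) → Perm (Fin n) => f 0) (t := SubInvStar σ)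
    (fun f hf => valid_head_subInv (mem_C_filter.1 hf) 0)]
  refine sum_congr rfl fun ρ hρ => ?_
  obtain ⟨hsub, hρ1⟩ := mem_subInvStar.1 hρ
  rw [C]
  apply card_nbij' (i := fun f => Fin.tail f) (j := fun g => Fin.cons ρ g)
  · -- tail of a valid tuple is valid for ρ * σ
    intro f hf
    simp only [Finset.mem_coe] at hf ⊢
    rw [mem_filter] at hf
    obtain ⟨hf, hf0⟩ := hf
    have hf : Valid σ f := mem_C_filter.1 hf
    rw [mem_C_filter]
    refine ⟨fun i => hf.1 i.succ,
      fun i j hij x => hf.2.1 i.succ j.succ (by simpa using hij) x, ?_⟩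
    have hofn : (List.ofFn f).prod = f 0 * (List.ofFn (Fin.tail f)).prod := by
      rw [List.ofFn_succ, List.prod_cons]; rfl
    have h1 : ρ * (List.ofFn (Fin.tail f)).prod = σ := by
      rw [← hf.2.2, hofn, hf0]
    calc (List.ofFn (Fin.tail f)).prod
        = ρ * (ρ * (List.ofFn (Fin.tail f)).prod) := by
          rw [← mul_assoc, hsub.1, one_mul]
      _ = ρ * σ := by rw [h1]
  · -- cons is valid
    intro g hg
    simp only [Finset.mem_coe] at hg ⊢
    have hg : Valid (ρ * σ) g := mem_C_filter.1 hg
    rw [mem_filter, mem_C_filter]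
    have key : ∀ (k : Fin s) (x : Fin n), g k x ≠ x → ρ x = x := by
      intro k x hx
      have h1 : (ρ * σ) x = g k x := valid_apply hg k x hx
      have h2 : (ρ * σ) x ≠ x := by rw [h1]; exact hx
      exact ((hsub.mul_moved_iff hσ).1 h2).2
    refine ⟨⟨?_, ?_, ?_⟩, Fin.cons_zero _ _⟩
    · intro i
      refine Fin.cases ?_ ?_ i
      · simpa using ⟨hsub.1, hρ1⟩
      · intro k; simpa using hg.1 k
    · intro i j hij x hx
      rcases Fin.eq_zero_or_eq_succ i with rfl | ⟨k, rfl⟩ <;>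
        rcases Fin.eq_zero_or_eq_succ j with rfl | ⟨l, rfl⟩
      · exact absurd rfl hij
      · simp only [Fin.cons_zero] at hx
        simp only [Fin.cons_succ]
        by_contra hgl
        exact hx (key l x hgl)
      · simp only [Fin.cons_succ] at hx
        simpa using key k x hx
      · have hkl : k ≠ l := by rintro rfl; exact hij rfl
        simp only [Fin.cons_succ] at hx ⊢
        exact hg.2.1 k l hkl x hx
    · have : List.ofFn (Fin.cons ρ g : Fin (s+1) → Perm (Fin n)) = ρ :: List.ofFn g := by
        rw [List.ofFn_succ]
        simp [Fin.cons_zero, Fin.cons_succ]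
      rw [this, List.prod_cons, hg.2.2, hsub.mul_cancel]
  · intro f hf
    simp only [Finset.mem_coe] at hf ⊢
    rw [mem_filter] at hf
    rw [← hf.2, Fin.cons_self_tail]
  · intro g _
    exact Fin.tail_cons _ _


def lset (ρ : Perm (Fin n)) : Finset (Fin n) := univ.filter fun x => x < ρ x

def suppF (ρ : Perm (Fin n)) : Finset (Fin n) := univ.filter fun x => ρ x ≠ x

lemma mem_lset {ρ : Perm (Fin n)} {x : Fin n} : x ∈ lset ρ ↔ x < ρ x := by
  simp [lset]

lemma mem_suppF {ρ : Perm (Fin n)} {x : Fin n} : x ∈ suppF ρ ↔ ρ x ≠ x := by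
  simp [suppF]

lemma lset_one : lset (1 : Perm (Fin n)) = ∅ := by
  ext x; simp [mem_lset]

lemma suppF_card {ρ : Perm (Fin n)} (h : ρ * ρ = 1) :
    (suppF ρ).card = 2 * (lset ρ).card := by
  classical
  have hunion : suppF ρ = lset ρ ∪ univ.filter (fun x => ρ x < x) := by
    ext x
    simp only [mem_suppF, mem_union, mem_lset, mem_filter, mem_univ, true_and]
    constructor
    · intro hx; exact (Ne.lt_or_gt hx).symm.imp id id
    · rintro (h1 | h1) <;> [exact h1.ne' ; exact h1.ne]
  have hdisj : Disjoint (lset ρ) (univ.filter (fun x => ρ x < x)) := by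
    rw [disjoint_left]
    intro x hx hx'
    rw [mem_lset] at hx
    rw [mem_filter] at hx'
    exact absurd hx (not_lt.2 hx'.2.le)
  have hcard : (univ.filter (fun x : Fin n => ρ x < x)).card = (lset ρ).card := by
    apply card_nbij' (i := fun x => ρ x) (j := fun x => ρ x)
    · intro x hx
      simp only [Finset.mem_coe] at hx ⊢
      rw [mem_filter] at hx
      rw [mem_lset]
      rw [sq_apply' h]
      exact hx.2
    · intro x hx
      simp only [Finset.mem_coe] at hx ⊢
      rw [mem_lset] at hx
      rw [mem_filter]
      rw [sq_apply' h]
      exact ⟨mem_univ _, hx⟩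
    · intro x _; exact sq_apply' h x
    · intro x _; exact sq_apply' h x
  rw [hunion, card_union_of_disjoint hdisj, hcard, two_mul]

lemma lset_subset_of_subInv {σ ρ : Perm (Fin n)} (h : SubInv σ ρ) :
    lset ρ ⊆ lset σ := by
  intro x hx
  rw [mem_lset] at hx ⊢
  rwa [← h.2 x hx.ne']

lemma lset_nonempty {ρ : Perm (Fin n)} (hinv : ρ * ρ = 1) (h : ρ ≠ 1) :
    (lset ρ).Nonempty := by
  obtain ⟨x, hx⟩ : ∃ x, ρ x ≠ x := by
    by_contra hc; push_neg at hc; exact h (Equiv.ext hc)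
  rcases Ne.lt_or_gt hx with h1 | h1
  · exact ⟨ρ x, mem_lset.2 (by rwa [sq_apply' hinv])⟩
  · exact ⟨x, mem_lset.2 h1⟩

lemma two_le_suppF_card {ρ : Perm (Fin n)} (hinv : ρ * ρ = 1) (h : ρ ≠ 1) :
    2 ≤ (suppF ρ).card := by
  obtain ⟨x, hx⟩ := lset_nonempty hinv h
  rw [mem_lset] at hx
  have hsub : ({x, ρ x} : Finset (Fin n)) ⊆ suppF ρ := by
    intro y hy
    rw [mem_insert, mem_singleton] at hy
    rcases hy with rfl | rfl
    · exact mem_suppF.2 hx.ne'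
    · exact mem_suppF.2 (by rw [sq_apply' hinv]; exact hx.ne)
  calc 2 = ({x, ρ x} : Finset (Fin n)).card := (card_pair hx.ne).symm
    _ ≤ _ := card_le_card hsub

lemma valid_suppF_le {σ : Perm (Fin n)} {t : ℕ} {f : Fin t → Perm (Fin n)}
    (hf : Valid σ f) : 2 * t ≤ (suppF σ).card := by
  classical
  have hsub : (univ : Finset (Fin t)).biUnion (fun i => suppF (f i)) ⊆ suppF σ := by
    intro x hx
    rw [mem_biUnion] at hx
    obtain ⟨i, _, hx⟩ := hx
    rw [mem_suppF] at hx ⊢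
    rw [valid_apply hf i x hx]
    exact hx
  have hdisj : (↑(univ : Finset (Fin t)) : Set (Fin t)).PairwiseDisjoint (fun i => suppF (f i)) := by
    intro i _ j _ hij
    rw [Function.onFun, disjoint_left]
    intro x hxi hxj
    rw [mem_suppF] at hxi hxj
    exact hxj (hf.2.1 i j hij x hxi)
  calc 2 * t = ∑ _i : Fin t, 2 := by simp [mul_comm]
    _ ≤ ∑ i : Fin t, (suppF (f i)).card :=
        Finset.sum_le_sum fun i _ => two_le_suppF_card (hf.1 i).1 (hf.1 i).2
    _ = ((univ : Finset (Fin t)).biUnion (fun i => suppF (f i))).card :=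
        (card_biUnion (fun i hi j hj hij => hdisj hi hj hij)).symm
    _ ≤ _ := card_le_card hsub

lemma C_eq_zero_of_lt {σ : Perm (Fin n)} {t : ℕ} (h : (suppF σ).card < 2 * t) :
    C σ t = 0 := by
  rw [C, card_eq_zero, filter_eq_empty_iff]
  intro f _ hf
  exact absurd (valid_suppF_le (f := f) hf) (not_le.2 h)


def rhoS (σ : Perm (Fin n)) (hσ : σ * σ = 1) (S : Finset (Fin n)) : Perm (Fin n) :=
  Function.Involutive.toPerm (fun x => if x ∈ S ∨ σ x ∈ S then σ x else x) (by
    intro x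
    by_cases h : x ∈ S ∨ σ x ∈ S
    · have h' : σ x ∈ S ∨ σ (σ x) ∈ S := by
        rw [sq_apply' hσ]; exact h.symm
      simp only [if_pos h, if_pos h']
      exact sq_apply' hσ x
    · simp only [if_neg h, if_neg h])

lemma rhoS_apply {σ : Perm (Fin n)} (hσ : σ * σ = 1) (S : Finset (Fin n)) (x : Fin n) :
    rhoS σ hσ S x = if x ∈ S ∨ σ x ∈ S then σ x else x := rfl

lemma rhoS_sq {σ : Perm (Fin n)} (hσ : σ * σ = 1) (S : Finset (Fin n)) :
    rhoS σ hσ S * rhoS σ hσ S = 1 := by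
  ext x
  rw [Perm.mul_apply, rhoS_apply, rhoS_apply]
  by_cases h : x ∈ S ∨ σ x ∈ S
  · have h' : σ x ∈ S ∨ σ (σ x) ∈ S := by
      rw [sq_apply' hσ]; exact h.symm
    rw [if_pos h, if_pos h']
    simp [sq_apply' hσ x]
  · rw [if_neg h, if_neg h]
    simp

lemma rhoS_subInv {σ : Perm (Fin n)} (hσ : σ * σ = 1) (S : Finset (Fin n)) :
    SubInv σ (rhoS σ hσ S) := by
  constructor
  · exact rhoS_sq hσ S
  · intro x hx
    rw [rhoS_apply] at hx ⊢
    by_cases h : x ∈ S ∨ σ x ∈ S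
    · rw [if_pos h]
    · rw [if_neg h] at hx; exact absurd rfl hx

lemma lset_rhoS {σ : Perm (Fin n)} (hσ : σ * σ = 1) {S : Finset (Fin n)}
    (hS : S ⊆ lset σ) : lset (rhoS σ hσ S) = S := by
  ext j
  rw [mem_lset, rhoS_apply]
  constructor
  · intro hj
    by_cases h : j ∈ S ∨ σ j ∈ S
    · rcases h with h | h
      · exact h
      · exfalso
        have h1 : σ j < σ (σ j) := mem_lset.1 (hS h)
        rw [sq_apply' hσ] at h1
        rw [if_pos (Or.inr h)] at hj
        exact absurd hj (not_lt.2 h1.le)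
    · rw [if_neg h] at hj; exact absurd hj (lt_irrefl j)
  · intro hj
    rw [if_pos (Or.inl hj)]
    exact mem_lset.1 (hS hj)

lemma rhoS_lset {σ ρ : Perm (Fin n)} (hσ : σ * σ = 1) (hsub : SubInv σ ρ) :
    rhoS σ hσ (lset ρ) = ρ := by
  ext x
  rw [rhoS_apply]
  by_cases hx : ρ x = x
  · rw [if_neg, hx]
    rintro (h | h)
    · exact absurd (mem_lset.1 h) (by rw [hx]; exact lt_irrefl x)
    · -- σ x ∈ lset ρ : σ x < ρ (σ x), so ρ (σ x) ≠ σ x, so ρ (σ x) = σ (σ x) = x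
      have h1 : σ x < ρ (σ x) := mem_lset.1 h
      have h2 : ρ (σ x) = σ (σ x) := hsub.2 _ h1.ne'
      rw [sq_apply' hσ] at h2
      have h3 : σ x = ρ x := by
        have := congrArg ρ h2
        rwa [sq_apply' hsub.1] at this
      have h4 : σ x = x := h3.trans hx
      rw [h4, hx] at h1
      exact absurd h1 (lt_irrefl x)
  · have hagree : ρ x = σ x := hsub.2 x hx
    rcases Ne.lt_or_gt hx with h1 | h1
    · -- ρ x < x, so σ x = ρ x ∈ lset ρ
      have hmem : σ x ∈ lset ρ := by
        rw [mem_lset, ← hagree, sq_apply' hsub.1]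
        exact h1
      rw [if_pos (Or.inr hmem), hagree]
    · rw [if_pos (Or.inl (mem_lset.2 h1)), hagree]

lemma subInv_self {σ : Perm (Fin n)} (hσ : σ * σ = 1) : SubInv σ σ :=
  ⟨hσ, fun _ _ => rfl⟩

lemma subInv_eq_of_lset_eq {σ ρ ρ' : Perm (Fin n)} (hσ : σ * σ = 1)
    (h : SubInv σ ρ) (h' : SubInv σ ρ') (hl : lset ρ = lset ρ') : ρ = ρ' := by
  rw [← rhoS_lset hσ h, ← rhoS_lset hσ h', hl]

lemma suppF_mul {σ ρ : Perm (Fin n)} (hσ : σ * σ = 1) (hsub : SubInv σ ρ) :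
    suppF (ρ * σ) = suppF σ \ suppF ρ := by
  ext x
  rw [mem_suppF, mem_sdiff, mem_suppF, mem_suppF, hsub.mul_moved_iff hσ]
  tauto

lemma suppF_subset {σ ρ : Perm (Fin n)} (hsub : SubInv σ ρ) : suppF ρ ⊆ suppF σ := by
  intro x hx
  rw [mem_suppF] at hx ⊢
  exact hsub.supp_subset hx


lemma key (p : ℕ) : 1 ≤ p → ∀ (σ : Perm (Fin n)), σ * σ = 1 → (suppF σ).card = 2 * p →
    ∀ B, p ≤ B → (∑ s ∈ range B, (-1 : ℤ) ^ (s + 1) * C σ (s + 1)) = (-1) ^ p := by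
  induction p using Nat.strong_induction_on with
  | _ p IH =>
  intro hp σ hσ hcard B hB
  obtain ⟨B', rfl⟩ : ∃ B', B = B' + 1 :=
    ⟨B - 1, (Nat.succ_pred_eq_of_pos (lt_of_lt_of_le hp hB)).symm⟩
  have hσne : σ ≠ 1 := by
    intro h
    rw [h] at hcard
    simp [suppF] at hcard
    omega
  have hσmem : σ ∈ SubInvStar σ := mem_subInvStar.2 ⟨subInv_self hσ, hσne⟩
  have hlcard : (lset σ).card = p := by
    have := suppF_card hσ
    omega
  have hLne : (lset σ).Nonempty := lset_nonempty hσ hσne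
  -- swap the sums
  have step1 : (∑ s ∈ range (B' + 1), (-1 : ℤ) ^ (s + 1) * C σ (s + 1))
      = ∑ ρ ∈ SubInvStar σ, ∑ s ∈ range (B' + 1), (-1 : ℤ) ^ (s + 1) * C (ρ * σ) s := by
    rw [← Finset.sum_comm]
    refine sum_congr rfl fun s _ => ?_
    rw [C_succ σ hσ s, Nat.cast_sum, mul_sum]
  rw [step1]
  -- inner sums
  have inner_eq : ∀ ρ : Perm (Fin n),
      (∑ s ∈ range (B' + 1), (-1 : ℤ) ^ (s + 1) * C (ρ * σ) s)
        = -(∑ u ∈ range B', (-1 : ℤ) ^ (u + 1) * C (ρ * σ) (u + 1)) - (C (ρ * σ) 0 : ℤ) := by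
    intro ρ
    rw [Finset.sum_range_succ']
    have h1 : ∀ u : ℕ, (-1 : ℤ) ^ (u + 1 + 1) * C (ρ * σ) (u + 1)
        = -((-1 : ℤ) ^ (u + 1) * C (ρ * σ) (u + 1)) := by
      intro u; rw [pow_succ]; ring
    rw [sum_congr rfl fun u _ => h1 u, Finset.sum_neg_distrib]
    ring
  -- value of each inner sum
  have hval : ∀ ρ ∈ (SubInvStar σ).erase σ,
      (∑ s ∈ range (B' + 1), (-1 : ℤ) ^ (s + 1) * C (ρ * σ) s)
        = -(-1) ^ (p - (lset ρ).card) := by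
    intro ρ hρ
    rw [mem_erase] at hρ
    obtain ⟨hρne, hρmem⟩ := hρ
    obtain ⟨hsub, hρ1⟩ := mem_subInvStar.1 hρmem
    set k := (lset ρ).card with hk
    have hk1 : 1 ≤ k := card_pos.2 (lset_nonempty hsub.1 hρ1)
    have hksub : lset ρ ⊆ lset σ := lset_subset_of_subInv hsub
    have hkle : k ≤ p := hlcard ▸ card_le_card hksub
    have hkne : k ≠ p := by
      intro h
      apply hρne
      exact subInv_eq_of_lset_eq hσ hsub (subInv_self hσ)
        (eq_of_subset_of_card_le hksub (by omega))
    have hklt : k < p := lt_of_le_of_ne hkle hkne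
    have hinv' : (ρ * σ) * (ρ * σ) = 1 := hsub.mul_sq hσ
    have hsuppρ : (suppF ρ).card = 2 * k := suppF_card hsub.1
    have hcard' : (suppF (ρ * σ)).card = 2 * (p - k) := by
      rw [suppF_mul hσ hsub, card_sdiff_of_subset (suppF_subset hsub), hcard, hsuppρ]
      omega
    have hne1 : ρ * σ ≠ 1 := by
      intro h
      rw [h] at hcard'
      simp [suppF] at hcard'
      omega
    rw [inner_eq ρ,
      IH (p - k) (by omega) (by omega) _ hinv' hcard' B' (by omega),
      C_zero, if_neg hne1]
    simp
  have hvalσ : (∑ s ∈ range (B' + 1), (-1 : ℤ) ^ (s + 1) * C (σ * σ) s) = -1 := by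
    rw [inner_eq σ, hσ]
    have h0 : ∀ u ∈ range B', (-1 : ℤ) ^ (u + 1) * C (1 : Perm (Fin n)) (u + 1) = 0 := by
      intro u _
      rw [C_one_succ]
      simp
    rw [sum_congr rfl h0, C_zero, if_pos rfl]
    simp
  rw [← Finset.add_sum_erase _ _ hσmem, hvalσ, sum_congr rfl hval]
  -- transfer to subsets
  have step2 : (∑ ρ ∈ (SubInvStar σ).erase σ, -(-1 : ℤ) ^ (p - (lset ρ).card))
      = ∑ S ∈ (((lset σ).powerset.erase ∅).erase (lset σ)), -(-1 : ℤ) ^ (p - S.card) := by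
    apply sum_nbij' (i := fun ρ => lset ρ) (j := fun S => rhoS σ hσ S)
    · intro ρ hρ
      rw [mem_erase] at hρ
      obtain ⟨hρne, hρmem⟩ := hρ
      obtain ⟨hsub, hρ1⟩ := mem_subInvStar.1 hρmem
      rw [mem_erase, mem_erase, mem_powerset]
      refine ⟨?_, ?_, lset_subset_of_subInv hsub⟩
      · intro h
        exact hρne (subInv_eq_of_lset_eq hσ hsub (subInv_self hσ) h)
      · exact nonempty_iff_ne_empty.1 (lset_nonempty hsub.1 hρ1)
    · intro S hS
      rw [mem_erase, mem_erase, mem_powerset] at hS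
      obtain ⟨hSL, hSne, hSsub⟩ := hS
      rw [mem_erase, mem_subInvStar]
      refine ⟨?_, rhoS_subInv hσ S, ?_⟩
      · intro h
        apply hSL
        rw [← lset_rhoS hσ hSsub, h]
      · intro h
        apply hSne
        rw [← lset_rhoS hσ hSsub, h, lset_one]
    · intro ρ hρ
      rw [mem_erase] at hρ
      exact rhoS_lset hσ (mem_subInvStar.1 hρ.2).1
    · intro S hS
      rw [mem_erase, mem_erase, mem_powerset] at hS
      exact lset_rhoS hσ hS.2.2
    · intro ρ _
      rfl
  rw [step2]
  -- evaluate the subset sum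
  set L := lset σ with hL
  set F : Finset (Fin n) → ℤ := fun S => -(-1 : ℤ) ^ (p - S.card) with hF
  have hmem1 : (∅ : Finset (Fin n)) ∈ L.powerset := empty_mem_powerset L
  have hmem2 : L ∈ L.powerset.erase ∅ := by
    rw [mem_erase]
    exact ⟨nonempty_iff_ne_empty.1 hLne, mem_powerset_self L⟩
  have e1 : F ∅ + ∑ S ∈ L.powerset.erase ∅, F S = ∑ S ∈ L.powerset, F S :=
    Finset.add_sum_erase _ _ hmem1
  have e2 : F L + ∑ S ∈ (L.powerset.erase ∅).erase L, F S = ∑ S ∈ L.powerset.erase ∅, F S :=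
    Finset.add_sum_erase _ _ hmem2
  have e3 : ∑ S ∈ L.powerset, F S = 0 := by
    have e4 : ∑ S ∈ L.powerset, F S = -∑ S ∈ L.powerset, (-1 : ℤ) ^ ((L \ S).card) := by
      rw [← Finset.sum_neg_distrib]
      refine sum_congr rfl fun S hS => ?_
      rw [mem_powerset] at hS
      rw [hF]
      rw [card_sdiff_of_subset hS, hlcard]
    rw [e4]
    have e5 : ∑ S ∈ L.powerset, (-1 : ℤ) ^ ((L \ S).card)
        = ∑ S ∈ L.powerset, (-1 : ℤ) ^ S.card := by
      apply sum_nbij' (i := fun S => L \ S) (j := fun S => L \ S)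
      · intro S _; exact mem_powerset.2 (sdiff_subset)
      · intro S _; exact mem_powerset.2 (sdiff_subset)
      · intro S hS; exact Finset.sdiff_sdiff_eq_self (mem_powerset.1 hS)
      · intro S hS; exact Finset.sdiff_sdiff_eq_self (mem_powerset.1 hS)
      · intro S _; rfl
    rw [e5, Finset.sum_powerset_neg_one_pow_card_of_nonempty hLne]
    simp
  have hFempty : F ∅ = -(-1 : ℤ) ^ p := by
    rw [hF]; simp
  have hFL : F L = -1 := by
    rw [hF]
    simp [hlcard]
  have efin : ∑ S ∈ (L.powerset.erase ∅).erase L, F S = (-1 : ℤ) ^ p + 1 := by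
    rw [hFempty, e3] at e1
    rw [hFL] at e2
    linarith
  rw [efin]
  ring


end Miyamoto

/-- For an involution `ρ` of `{1,…,n}` and coefficients `e`, the product
`E_ρ = ∏_{j < ρ(j)} e(j, ρ(j))` (one factor per 2-element orbit of `ρ`). -/
noncomputable def involutionProd {R : Type*} [CommRing R] {n : ℕ}
    (e : Fin n → Fin n → R) (ρ : Equiv.Perm (Fin n)) : R :=
  ∏ j ∈ Finset.univ.filter (fun j => j < ρ j), e j (ρ j)

namespace Miyamoto

variable {n : ℕ}

lemma involutionProd_eq {R : Type*} [CommRing R] (e : Fin n → Fin n → R)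
    (ρ : Perm (Fin n)) : involutionProd e ρ = ∏ j ∈ lset ρ, e j (ρ j) := rfl

lemma prod_involutionProd {R : Type*} [CommRing R] (e : Fin n → Fin n → R)
    {σ : Perm (Fin n)} {t : ℕ} {f : Fin t → Perm (Fin n)} (hf : Valid σ f) :
    ∏ i, involutionProd e (f i) = involutionProd e σ := by
  classical
  have hdisj : (↑(univ : Finset (Fin t)) : Set (Fin t)).PairwiseDisjoint (fun i => lset (f i)) := by
    intro i _ j _ hij
    rw [Function.onFun, disjoint_left]
    intro x hxi hxj
    rw [mem_lset] at hxi hxj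
    have := hf.2.1 i j hij x hxi.ne'
    rw [this] at hxj
    exact absurd hxj (lt_irrefl x)
  have hunion : (univ : Finset (Fin t)).biUnion (fun i => lset (f i)) = lset σ := by
    ext j
    rw [mem_biUnion, mem_lset]
    constructor
    · rintro ⟨i, -, hi⟩
      rw [mem_lset] at hi
      rwa [valid_apply hf i j hi.ne']
    · intro hj
      obtain ⟨i, hi⟩ : ∃ i, f i j ≠ j := by
        by_contra hc
        push_neg at hc
        exact absurd (valid_fixed hf j hc) hj.ne'
      exact ⟨i, mem_univ i, mem_lset.2 (by rwa [← valid_apply hf i j hi])⟩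
  calc ∏ i, involutionProd e (f i)
      = ∏ i, ∏ j ∈ lset (f i), e j (σ j) := by
        refine Finset.prod_congr rfl fun i _ => ?_
        rw [involutionProd_eq]
        refine Finset.prod_congr rfl fun j hj => ?_
        rw [mem_lset] at hj
        rw [valid_apply hf i j hj.ne']
    _ = ∏ j ∈ (univ : Finset (Fin t)).biUnion (fun i => lset (f i)), e j (σ j) :=
        (Finset.prod_biUnion hdisj).symm
    _ = involutionProd e σ := by rw [hunion, involutionProd_eq]

end Miyamoto

/-- Miyamoto's Lemma: for an involution `σ` whose moved set has cardinality `2p`, `p ≥ 1`,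
`Σ_{t ≥ 1} Σ_{(σ₁,…,σ_t)} (−1)^t E_{σ₁}⋯E_{σ_t} = (−1)^p E_σ`, the inner sum being over
ordered `t`-tuples of non-identity involutions with pairwise disjoint moved sets whose
composite is `σ`. -/
theorem sum_tuples_involutions_eq {R : Type*} [CommRing R] (n p : ℕ) (hp : 1 ≤ p)
    (e : Fin n → Fin n → R) (σ : Equiv.Perm (Fin n)) (hσ : σ * σ = 1)
    (hcard : (Finset.univ.filter (fun i => σ i ≠ i)).card = 2 * p) :
    (∑ᶠ t ∈ Set.Ici (1 : ℕ),
      ∑ f ∈ (Finset.univ : Finset (Fin t → Equiv.Perm (Fin n))).filter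
        (fun f => (∀ i, f i * f i = 1 ∧ f i ≠ 1) ∧
          (∀ i j, i ≠ j → ∀ x, f i x ≠ x → f j x = x) ∧
          (List.ofFn f).prod = σ),
        (-1 : R) ^ t * ∏ i, involutionProd e (f i))
    = (-1 : R) ^ p * involutionProd e σ := by
  classical
  have hsupp : (Miyamoto.suppF σ).card = 2 * p := hcard
  have hG : ∀ t : ℕ,
      (∑ f ∈ (Finset.univ : Finset (Fin t → Equiv.Perm (Fin n))).filter
        (fun f => (∀ i, f i * f i = 1 ∧ f i ≠ 1) ∧
          (∀ i j, i ≠ j → ∀ x, f i x ≠ x → f j x = x) ∧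
          (List.ofFn f).prod = σ),
        (-1 : R) ^ t * ∏ i, involutionProd e (f i))
      = (-1 : R) ^ t * (Miyamoto.C σ t : R) * involutionProd e σ := by
    intro t
    trans (Miyamoto.C σ t) • ((-1 : R) ^ t * involutionProd e σ)
    · rw [Miyamoto.C, ← Finset.sum_const]
      refine Finset.sum_congr rfl fun f hf => ?_
      rw [Miyamoto.prod_involutionProd e (Miyamoto.mem_C_filter.1 hf)]
    · rw [nsmul_eq_mul]; ring
  rw [finsum_mem_congr rfl fun t _ => hG t]
  set G : ℕ → R := fun t => (-1 : R) ^ t * (Miyamoto.C σ t : R) * involutionProd e σ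
    with hGdef
  have hsuppF : Set.Ici (1 : ℕ) ∩ Function.support G
      = ↑(Finset.Icc 1 p) ∩ Function.support G := by
    ext t
    simp only [Set.mem_inter_iff, Set.mem_Ici, Finset.coe_Icc, Set.mem_Icc,
      Function.mem_support]
    constructor
    · rintro ⟨h1, h2⟩
      refine ⟨⟨h1, ?_⟩, h2⟩
      by_contra hgt
      push_neg at hgt
      apply h2
      simp only [hGdef]
      rw [Miyamoto.C_eq_zero_of_lt (by rw [hsupp]; omega)]
      simp
    · rintro ⟨⟨h1, -⟩, h2⟩
      exact ⟨h1, h2⟩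
  rw [finsum_mem_eq_sum_of_inter_support_eq G hsuppF]
  have hsum : (∑ t ∈ Finset.Icc 1 p, G t)
      = ((((∑ s ∈ Finset.range p, (-1 : ℤ) ^ (s + 1) * (Miyamoto.C σ (s + 1) : ℤ)) : ℤ) : R)
          * involutionProd e σ) := by
    rw [← Finset.Ico_add_one_right_eq_Icc, Finset.sum_Ico_eq_sum_range]
    push_cast
    rw [Finset.sum_mul]
    refine Finset.sum_congr rfl fun s _ => ?_
    simp only [hGdef]
    rw [add_comm 1 s]
  rw [hsum, Miyamoto.key p hp σ hσ hsupp p le_rfl]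
  push_cast
  ring
end

section
/- Let R be a commutative ring, n a natural number, d, e : {1,…,n} × {1,…,n} → R functions, and σ an involution of {1,…,n}. Then Σ_{(σ₁,σ₂)} (−1)^{|m(σ₁)|/2} · (∏_{j < σ₁(j)} e(j, σ₁(j))) · (∏_{j < σ₂(j)} d(j, σ₂(j))) = ∏_{j < σ(j)} (d(j, σ(j)) − e(j, σ(j))), where the sum is over all ordered pairs (σ₁, σ₂) of involutions of {1,…,n} (the identity allowed) whose moved sets m(σ₁), m(σ₂) are disjoint and whose composite σ₁∘σ₂ equals σ. -/
open Finset

/-- Restriction of an involution to a σ-invariant predicate. -/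
def condPerm {n : ℕ} (σ : Equiv.Perm (Fin n)) (hσ : ∀ x, σ (σ x) = x)
    (p : Fin n → Prop) [DecidablePred p] (hp : ∀ x, p x → p (σ x)) : Equiv.Perm (Fin n) :=
  Function.Involutive.toPerm (fun x => if p x then σ x else x) (by
    intro x
    by_cases h : p x
    · simp [h, hp x h, hσ x]
    · simp [h])

lemma condPerm_apply {n : ℕ} (σ : Equiv.Perm (Fin n)) (hσ : ∀ x, σ (σ x) = x)
    (p : Fin n → Prop) [DecidablePred p] (hp : ∀ x, p x → p (σ x)) (x : Fin n) :
    condPerm σ hσ p hp x = if p x then σ x else x := rfl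

lemma condPerm_invol {n : ℕ} (σ : Equiv.Perm (Fin n)) (hσ : ∀ x, σ (σ x) = x)
    (p : Fin n → Prop) [DecidablePred p] (hp : ∀ x, p x → p (σ x)) (x : Fin n) :
    condPerm σ hσ p hp (condPerm σ hσ p hp x) = x := by
  simp only [condPerm_apply]
  by_cases h : p x
  · simp [h, hp x h, hσ x]
  · simp [h]

lemma sigma_cases {n : ℕ} {σ π₁ π₂ : Equiv.Perm (Fin n)} (h2 : π₂ * π₂ = 1)
    (hd : ∀ x, π₁ x ≠ x → π₂ x = x) (hp : π₁ * π₂ = σ) (x : Fin n) :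
    (π₂ x = x ∧ σ x = π₁ x) ∨ (π₂ x ≠ x ∧ π₁ x = x ∧ σ x = π₂ x) := by
  have inv2 : ∀ y, π₂ (π₂ y) = y := fun y => by
    rw [← Equiv.Perm.mul_apply, h2, Equiv.Perm.one_apply]
  have hx : σ x = π₁ (π₂ x) := by rw [← hp]; rfl
  by_cases h : π₂ x = x
  · exact Or.inl ⟨h, by rw [hx, h]⟩
  · refine Or.inr ⟨h, ?_, ?_⟩
    · by_contra hne; exact h (hd x hne)
    · have h12 : π₁ (π₂ x) = π₂ x := by
        by_contra hne
        have := hd _ hne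
        rw [inv2] at this
        exact h this.symm
      rw [hx, h12]

lemma invol_card {n : ℕ} (τ : Equiv.Perm (Fin n)) (hτ : ∀ x, τ (τ x) = x) :
    (univ.filter fun x => τ x ≠ x).card = 2 * (univ.filter fun x => x < τ x).card := by
  have hset : (univ.filter fun x => τ x ≠ x)
      = (univ.filter fun x => x < τ x) ∪ (univ.filter fun x => τ x < x) := by
    ext x
    simp only [mem_filter, mem_univ, mem_union, true_and, ne_iff_lt_or_gt]
    tauto
  have hdisj : Disjoint (univ.filter fun x => x < τ x) (univ.filter fun x => τ x < x) := by
    rw [Finset.disjoint_left]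
    intro a ha hb
    simp only [mem_filter, mem_univ, true_and] at ha hb
    exact absurd (ha.trans hb) (lt_irrefl a)
  have hcard : (univ.filter fun x => τ x < x).card = (univ.filter fun x => x < τ x).card := by
    apply Finset.card_bij (fun a _ => τ a)
    · intro a ha
      simp only [mem_filter, mem_univ, true_and] at ha ⊢
      rw [hτ]; exact ha
    · intro a _ b _ hab
      exact τ.injective hab
    · intro b hb
      simp only [mem_filter, mem_univ, true_and] at hb
      exact ⟨τ b, by simp only [mem_filter, mem_univ, true_and, hτ]; exact hb, hτ b⟩
  rw [hset, Finset.card_union_of_disjoint hdisj, hcard]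
  ring

/-- For an involution `σ` of `{1,…,n}` and coefficients `d, e`, the sum over ordered pairs
`(σ₁,σ₂)` of involutions with disjoint moved sets and `σ₁∘σ₂ = σ` of
`(−1)^{|m(σ₁)|/2} · (∏_{j<σ₁(j)} e(j,σ₁(j))) · (∏_{j<σ₂(j)} d(j,σ₂(j)))`
equals `∏_{j<σ(j)} (d(j,σ(j)) − e(j,σ(j)))`. -/
theorem sum_pairs_involutions_eq_prod_sub {R : Type*} [CommRing R] (n : ℕ)
    (d e : Fin n → Fin n → R) (σ : Equiv.Perm (Fin n)) (hσ : σ * σ = 1) :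
    (∑ π ∈ (Finset.univ : Finset (Equiv.Perm (Fin n) × Equiv.Perm (Fin n))).filter
      (fun π => π.1 * π.1 = 1 ∧ π.2 * π.2 = 1 ∧
        (∀ x, π.1 x ≠ x → π.2 x = x) ∧ π.1 * π.2 = σ),
      (-1 : R) ^ ((Finset.univ.filter (fun x => π.1 x ≠ x)).card / 2) *
        (∏ j ∈ Finset.univ.filter (fun j => j < π.1 j), e j (π.1 j)) *
        ∏ j ∈ Finset.univ.filter (fun j => j < π.2 j), d j (π.2 j))
    = ∏ j ∈ Finset.univ.filter (fun j => j < σ j), (d j (σ j) - e j (σ j)) := by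
  have hσ' : ∀ x, σ (σ x) = x := fun x => by
    rw [← Equiv.Perm.mul_apply, hσ, Equiv.Perm.one_apply]
  set T := univ.filter (fun j : Fin n => j < σ j) with hTdef
  have hRHS : ∏ j ∈ T, (d j (σ j) - e j (σ j))
      = ∑ S ∈ T.powerset,
        (-1 : R) ^ S.card * (∏ j ∈ S, e j (σ j)) * ∏ j ∈ T \ S, d j (σ j) := by
    have h0 : ∀ j ∈ T, d j (σ j) - e j (σ j) = (-1) * e j (σ j) + d j (σ j) := by
      intro j _; ring
    rw [Finset.prod_congr rfl h0, Finset.prod_add]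
    refine Finset.sum_congr rfl fun S _ => ?_
    rw [Finset.prod_mul_distrib, Finset.prod_const]
  rw [hRHS]
  have hp1 : ∀ (S : Finset (Fin n)) x, (x ∈ S ∨ σ x ∈ S) → (σ x ∈ S ∨ σ (σ x) ∈ S) := by
    intro S x h; rw [hσ' x]; tauto
  have hp2 : ∀ (S : Finset (Fin n)) x, ¬(x ∈ S ∨ σ x ∈ S) → ¬(σ x ∈ S ∨ σ (σ x) ∈ S) := by
    intro S x h; rw [hσ' x]; tauto
  refine Finset.sum_bij'
    (fun π _ => univ.filter fun j => j < π.1 j)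
    (fun S _ => (condPerm σ hσ' (fun x => x ∈ S ∨ σ x ∈ S) (hp1 S),
                 condPerm σ hσ' (fun x => ¬(x ∈ S ∨ σ x ∈ S)) (hp2 S)))
    ?_ ?_ ?_ ?_ ?_
  · -- hi : image is in the powerset
    rintro π hπ
    simp only [mem_filter, mem_univ, true_and] at hπ
    obtain ⟨h1, h2, hd, hp⟩ := hπ
    rw [Finset.mem_powerset]
    intro j hj
    simp only [mem_filter, mem_univ, true_and] at hj
    simp only [hTdef, mem_filter, mem_univ, true_and]
    rcases sigma_cases h2 hd hp j with ⟨_, hs⟩ | ⟨_, hfix, _⟩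
    · rw [hs]; exact hj
    · rw [hfix] at hj; exact absurd hj (lt_irrefl j)
  · -- hj : the pair is in the filter
    rintro S _
    simp only [mem_filter, mem_univ, true_and]
    refine ⟨?_, ?_, ?_, ?_⟩
    · exact Equiv.ext fun x => by
        rw [Equiv.Perm.mul_apply, condPerm_invol, Equiv.Perm.one_apply]
    · exact Equiv.ext fun x => by
        rw [Equiv.Perm.mul_apply, condPerm_invol, Equiv.Perm.one_apply]
    · intro x hx
      by_cases h : x ∈ S ∨ σ x ∈ S
      · rw [condPerm_apply, if_neg (not_not_intro h)]
      · rw [condPerm_apply, if_neg h] at hx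
        exact absurd rfl hx
    · refine Equiv.ext fun x => ?_
      rw [Equiv.Perm.mul_apply]
      by_cases h : x ∈ S ∨ σ x ∈ S
      · have e2 : condPerm σ hσ' (fun y => ¬(y ∈ S ∨ σ y ∈ S)) (hp2 S) x = x := by
          rw [condPerm_apply, if_neg (not_not_intro h)]
        rw [e2, condPerm_apply, if_pos h]
      · have h' : ¬(σ x ∈ S ∨ σ (σ x) ∈ S) := hp2 S x h
        have e2 : condPerm σ hσ' (fun y => ¬(y ∈ S ∨ σ y ∈ S)) (hp2 S) x = σ x := by
          rw [condPerm_apply, if_pos h]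
        rw [e2, condPerm_apply, if_neg h']
  · -- left_inv
    rintro π hπ
    simp only [mem_filter, mem_univ, true_and] at hπ
    obtain ⟨h1, h2, hd, hp⟩ := hπ
    have inv1 : ∀ y, π.1 (π.1 y) = y := fun y => by
      rw [← Equiv.Perm.mul_apply, h1, Equiv.Perm.one_apply]
    have hmemS : ∀ x, x ∈ univ.filter (fun j => j < π.1 j) ↔ x < π.1 x := by
      intro x; simp
    -- key: if π.1 x ≠ x then σ x = π.1 x and P x holds
    have key : ∀ x, π.1 x ≠ x → σ x = π.1 x ∧
        (x ∈ univ.filter (fun j => j < π.1 j) ∨ σ x ∈ univ.filter (fun j => j < π.1 j)) := by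
      intro x hx
      have hsx : σ x = π.1 x := by
        rcases sigma_cases h2 hd hp x with ⟨_, hs⟩ | ⟨_, hfix, _⟩
        · exact hs
        · exact absurd hfix hx
      refine ⟨hsx, ?_⟩
      rcases lt_or_gt_of_ne (Ne.symm hx) with hlt | hgt
      · exact Or.inl ((hmemS x).2 hlt)
      · refine Or.inr ((hmemS _).2 ?_)
        rw [hsx, inv1]
        exact hgt
    -- key2 : if ¬P x then π.1 x = x
    have key2 : ∀ x, ¬(x ∈ univ.filter (fun j => j < π.1 j) ∨
        σ x ∈ univ.filter (fun j => j < π.1 j)) → π.1 x = x := by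
      intro x hP
      by_contra hne
      exact hP (key x hne).2
    have goal1 : ∀ x, condPerm σ hσ' (fun y => y ∈ univ.filter (fun j => j < π.1 j) ∨
        σ y ∈ univ.filter (fun j => j < π.1 j)) (hp1 _) x = π.1 x := by
      intro x
      rw [condPerm_apply]
      by_cases hP : x ∈ univ.filter (fun j => j < π.1 j) ∨
          σ x ∈ univ.filter (fun j => j < π.1 j)
      · rw [if_pos hP]
        -- P x holds; show σ x = π.1 x
        rcases hP with hx | hsx
        · exact (key x (ne_of_gt ((hmemS x).1 hx))).1
        · -- σ x ∈ S
          rw [hmemS] at hsx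
          have hk := key (σ x) (ne_of_gt hsx)
          -- σ (σ x) = π.1 (σ x), i.e. x = π.1 (σ x)
          have hx2 : x = π.1 (σ x) := by rw [← hk.1, hσ']
          have hfin : π.1 x = σ x := π.1.injective (by rw [inv1]; exact hx2)
          exact hfin.symm
      · rw [if_neg hP]
        exact (key2 x hP).symm
    have goal2 : ∀ x, condPerm σ hσ' (fun y => ¬(y ∈ univ.filter (fun j => j < π.1 j) ∨
        σ y ∈ univ.filter (fun j => j < π.1 j))) (hp2 _) x = π.2 x := by
      intro x
      rw [condPerm_apply]
      by_cases hP : x ∈ univ.filter (fun j => j < π.1 j) ∨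
          σ x ∈ univ.filter (fun j => j < π.1 j)
      · rw [if_neg (not_not_intro hP)]
        -- show π.2 x = x
        symm
        rcases hP with hx | hsx
        · exact hd x (ne_of_gt ((hmemS x).1 hx))
        · rw [hmemS] at hsx
          rcases sigma_cases h2 hd hp x with ⟨hfix, _⟩ | ⟨hne, _, hs⟩
          · exact hfix
          · -- σ x = π.2 x and σ x ∈ supp π.1 moved; contradiction
            exfalso
            have hmoved : π.1 (σ x) ≠ σ x := ne_of_gt hsx
            have := hd _ hmoved
            rw [hs] at this
            have inv2 : ∀ y, π.2 (π.2 y) = y := fun y => by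
              rw [← Equiv.Perm.mul_apply, h2, Equiv.Perm.one_apply]
            rw [inv2] at this
            exact hne this.symm
      · rw [if_pos hP]
        rcases sigma_cases h2 hd hp x with ⟨hfix, hs⟩ | ⟨_, _, hs⟩
        · rw [hs, key2 x hP, hfix]
        · exact hs
    exact Prod.ext (Equiv.ext goal1) (Equiv.ext goal2)
  · -- right_inv
    rintro S hS
    rw [Finset.mem_powerset] at hS
    ext x
    simp only [mem_filter, mem_univ, true_and]
    simp only [condPerm_apply]
    constructor
    · intro hx
      by_cases hP : x ∈ S ∨ σ x ∈ S
      · rw [if_pos hP] at hx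
        rcases hP with h | h
        · exact h
        · exfalso
          have := hS h
          simp only [hTdef, mem_filter, mem_univ, true_and, hσ'] at this
          exact absurd (hx.trans this) (lt_irrefl x)
      · rw [if_neg hP] at hx
        exact absurd hx (lt_irrefl x)
    · intro hx
      have hT : x ∈ T := hS hx
      simp only [hTdef, mem_filter, mem_univ, true_and] at hT
      rw [if_pos (Or.inl hx)]
      exact hT
  · -- value equality
    rintro π hπ
    simp only [mem_filter, mem_univ, true_and] at hπ
    obtain ⟨h1, h2, hd, hp⟩ := hπ
    have inv1 : ∀ y, π.1 (π.1 y) = y := fun y => by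
      rw [← Equiv.Perm.mul_apply, h1, Equiv.Perm.one_apply]
    have hexp : (univ.filter fun x => π.1 x ≠ x).card / 2
        = (univ.filter fun j => j < π.1 j).card := by
      rw [invol_card π.1 inv1, Nat.mul_div_cancel_left _ (by norm_num)]
    have he : ∀ j ∈ univ.filter (fun j => j < π.1 j), e j (π.1 j) = e j (σ j) := by
      intro j hj
      simp only [mem_filter, mem_univ, true_and] at hj
      rcases sigma_cases h2 hd hp j with ⟨_, hs⟩ | ⟨_, hfix, _⟩
      · rw [hs]
      · rw [hfix] at hj; exact absurd hj (lt_irrefl j)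
    have hdomd : univ.filter (fun j => j < π.2 j)
        = T \ (univ.filter fun j => j < π.1 j) := by
      ext x
      simp only [hTdef, mem_filter, mem_univ, true_and, Finset.mem_sdiff]
      constructor
      · intro hx
        rcases sigma_cases h2 hd hp x with ⟨hfix, _⟩ | ⟨_, hfix1, hs⟩
        · rw [hfix] at hx; exact absurd hx (lt_irrefl x)
        · rw [hs]
          refine ⟨hx, ?_⟩
          simp only [mem_filter, mem_univ, true_and, hfix1]
          exact lt_irrefl x
      · rintro ⟨hx, hnx⟩
        rcases sigma_cases h2 hd hp x with ⟨_, hs⟩ | ⟨_, _, hs⟩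
        · rw [hs] at hx; exact absurd hx hnx
        · rw [hs] at hx; exact hx
    have hdval : ∀ j ∈ T \ (univ.filter fun j => j < π.1 j), d j (π.2 j) = d j (σ j) := by
      rintro j hj
      rw [← hdomd] at hj
      simp only [mem_filter, mem_univ, true_and] at hj
      rcases sigma_cases h2 hd hp j with ⟨hfix, _⟩ | ⟨_, _, hs⟩
      · rw [hfix] at hj; exact absurd hj (lt_irrefl j)
      · rw [hs]
    rw [hexp, Finset.prod_congr rfl he, hdomd, Finset.prod_congr rfl hdval]
end
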